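/- Let a : ℝ → ℝ be a function with a(t) > 0 for all t. If z : ℝ → ℝ is twice differentiable, satisfies z''(t) = a(t)·z(t) for all t, and z(t) → 0 as t → +∞ and as t → −∞, then z(t) = 0 for all t. In particular the variational equation z'' = a(t)z with positive coefficient admits no nontrivial solution biasymptotic to zero, which yields transversality of the intersection of the unstable and stable manifolds along the homoclinic orbit. -/
import Mathlib


open Real Filter

/-- The variational equation `z'' = a(t) z` with positive coefficient `a`
admits no nontrivial solution biasymptotic to zero: if `z → 0` at both `±∞`, then `z ≡ 0`. -/
theorem no_nontrivial_biasymptotic_solution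
    (a : ℝ → ℝ) (ha : ∀ t, 0 < a t)
    (z z' : ℝ → ℝ)
    (hz : ∀ t, HasDerivAt z (z' t) t)
    (hz' : ∀ t, HasDerivAt z' (a t * z t) t)
    (htop : Tendsto z atTop (nhds 0))
    (hbot : Tendsto z atBot (nhds 0)) :
    ∀ t, z t = 0 := by
  set g : ℝ → ℝ := fun t => z t * z t with hg
  have hgd : ∀ t, HasDerivAt g (z' t * z t + z t * z' t) t := fun t =>
    (hz t).mul (hz t)
  have hgd2 : ∀ t, HasDerivAt (fun t => z' t * z t + z t * z' t)
      ((a t * z t) * z t + z' t * z' t + (z' t * z' t + z t * (a t * z t))) t := fun t =>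
    ((hz' t).mul (hz t)).add ((hz t).mul (hz' t))
  have hderiv1 : deriv g = fun t => z' t * z t + z t * z' t := by
    funext t; exact (hgd t).deriv
  have hconv : ConvexOn ℝ Set.univ g := by
    apply convexOn_univ_of_deriv2_nonneg
    · exact fun t => (hgd t).differentiableAt
    · rw [hderiv1]; exact fun t => (hgd2 t).differentiableAt
    · intro x
      have : deriv^[2] g x = (a x * z x) * z x + z' x * z' x + (z' x * z' x + z x * (a x * z x)) := by
        simp only [Function.iterate_succ, Function.iterate_zero, Function.comp_apply, id]
        rw [hderiv1]
        exact (hgd2 x).deriv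
      rw [this]
      have h1 : 0 ≤ a x * z x * z x := by
        rcases mul_self_nonneg (z x) with h
        nlinarith [(ha x).le]
      nlinarith [mul_self_nonneg (z' x), mul_self_nonneg (z x), (ha x).le]
  -- g tends to 0 at ±∞
  have hgtop : Tendsto g atTop (nhds 0) := by
    simpa using htop.mul htop
  have hgbot : Tendsto g atBot (nhds 0) := by
    simpa using hbot.mul hbot
  intro t
  have hle : g t ≤ 0 := by
    refine le_of_forall_pos_le_add ?_
    intro ε hε
    have h1 : ∀ᶠ u in atTop, g u < ε := by
      have := hgtop (Iio_mem_nhds hε)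
      filter_upwards [this] with u hu using hu
    have h2 : ∀ᶠ s in atBot, g s < ε := by
      have := hgbot (Iio_mem_nhds hε)
      filter_upwards [this] with u hu using hu
    obtain ⟨u, hu1, hu2⟩ := (h1.and (eventually_ge_atTop t)).exists
    obtain ⟨s, hs1, hs2⟩ := (h2.and (eventually_le_atBot t)).exists
    have hseg : t ∈ segment ℝ s u := by
      rw [segment_eq_Icc (hs2.trans hu2)]
      exact ⟨hs2, hu2⟩
    have := hconv.le_on_segment (Set.mem_univ s) (Set.mem_univ u) hseg
    calc g t ≤ max (g s) (g u) := this
      _ ≤ 0 + ε := by rw [zero_add]; exact max_le hs1.le hu1.le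
  have := mul_self_nonneg (z t)
  have : z t * z t = 0 := le_antisymm hle this
  exact mul_self_eq_zero.mp this
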